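/- Let v be a positive semidefinite kernel on D, let r ≥ 1 and let Q : Fin r → D be knots such that the r×r Gram matrix G with entries G(k,l) = v(Q(k),Q(l)) is positive definite. Define b(s) ∈ ℝʳ by b(s)_k = v(s,Q(k)). Then the residual kernel w(s,t) = v(s,t) − b(s)ᵀ G⁻¹ b(t) is positive semidefinite. -/

import Mathlib

open scoped BigOperators Matrix

/-- For a PSD kernel `v`, knots `Q` with positive-definite Gram
matrix `G`, the residual kernel `w(s,t) = v(s,t) − b(s)ᵀ G⁻¹ b(t)` is
positive semidefinite (symmetric with nonnegative quadratic forms). -/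
theorem residual_kernel_posSemidef
    {D : Type*} (v : D → D → ℝ)
    (hsymm : ∀ s t, v s t = v t s)
    (hpsd : ∀ (n : ℕ) (s : Fin n → D) (c : Fin n → ℝ),
      0 ≤ ∑ i, ∑ j, c i * c j * v (s i) (s j))
    (r : ℕ) (hr : 1 ≤ r) (Q : Fin r → D)
    (G : Matrix (Fin r) (Fin r) ℝ)
    (hG : ∀ k l, G k l = v (Q k) (Q l))
    (hGpd : G.PosDef)
    (b : D → Fin r → ℝ)
    (hb : ∀ s k, b s k = v s (Q k))
    (w : D → D → ℝ)
    (hw : ∀ s t, w s t = v s t - b s ⬝ᵥ (G⁻¹).mulVec (b t)) :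
    (∀ s t, w s t = w t s) ∧
    (∀ (n : ℕ) (s : Fin n → D) (c : Fin n → ℝ),
      0 ≤ ∑ i, ∑ j, c i * c j * w (s i) (s j)) := by
  have hGdet : IsUnit G.det := isUnit_iff_ne_zero.mpr hGpd.det_pos.ne'
  have hGsymm : Gᵀ = G := by
    ext k l; simp only [Matrix.transpose_apply, hG]; exact hsymm _ _
  have hMsymm : (G⁻¹)ᵀ = G⁻¹ := by rw [Matrix.transpose_nonsing_inv, hGsymm]
  have hGM : G * G⁻¹ = 1 := Matrix.mul_nonsing_inv G hGdet
  set M := G⁻¹ with hM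
  have hdot : ∀ x y : Fin r → ℝ, x ⬝ᵥ M.mulVec y = y ⬝ᵥ M.mulVec x := by
    intro x y
    rw [Matrix.dotProduct_mulVec, ← Matrix.mulVec_transpose, hMsymm,
      dotProduct_comm]
  constructor
  · intro s t
    rw [hw, hw, hsymm, hdot]
  · intro n s c
    set a : Fin r → ℝ := fun k => ∑ i, c i * b (s i) k with ha
    have ha' : ∀ k, a k = ∑ i, c i * v (s i) (Q k) := by
      intro k; simp only [ha, hb]
    set d : Fin r → ℝ := fun k => -(M.mulVec a k) with hd
    set T : ℝ := a ⬝ᵥ M.mulVec a with hT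
    have expand : ∀ x y : Fin r → ℝ, x ⬝ᵥ M.mulVec y = ∑ k, ∑ l, x k * (M k l * y l) := by
      intro x y
      simp [dotProduct, Matrix.mulVec, Finset.mul_sum]
    -- cross term 1
    have hc1 : ∑ i : Fin n, ∑ j : Fin r, c i * d j * v (s i) (Q j) = -T := by
      rw [Finset.sum_comm]
      have h : ∀ j : Fin r, ∑ i : Fin n, c i * d j * v (s i) (Q j) = d j * a j := by
        intro j
        rw [ha' j, Finset.mul_sum]
        exact Finset.sum_congr rfl fun i _ => by ring
      rw [Finset.sum_congr rfl fun j _ => h j]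
      simp only [hd, neg_mul, Finset.sum_neg_distrib, hT, dotProduct]
      congr 1
      exact Finset.sum_congr rfl fun j _ => mul_comm _ _
    -- cross term 2
    have hc2 : ∑ i : Fin r, ∑ j : Fin n, d i * c j * v (Q i) (s j) = -T := by
      have h : ∀ i : Fin r, ∑ j : Fin n, d i * c j * v (Q i) (s j) = d i * a i := by
        intro i
        rw [ha' i, Finset.mul_sum]
        exact Finset.sum_congr rfl fun j _ => by rw [hsymm]; ring
      rw [Finset.sum_congr rfl fun i _ => h i]
      simp only [hd, neg_mul, Finset.sum_neg_distrib, hT, dotProduct]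
      congr 1
      exact Finset.sum_congr rfl fun j _ => mul_comm _ _
    -- Gram block
    have hdd : ∑ i : Fin r, ∑ j : Fin r, d i * d j * v (Q i) (Q j) = T := by
      have h1 : ∑ i : Fin r, ∑ j : Fin r, d i * d j * v (Q i) (Q j)
          = d ⬝ᵥ G.mulVec d := by
        simp only [dotProduct, Matrix.mulVec, Finset.mul_sum, hG]
        exact Finset.sum_congr rfl fun i _ => Finset.sum_congr rfl fun j _ => by ring
      rw [h1]
      have hdfun : d = -(M.mulVec a) := by funext k; simp [hd]
      rw [hdfun, Matrix.mulVec_neg, dotProduct_neg, neg_dotProduct, neg_neg,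
        Matrix.mulVec_mulVec, hGM, Matrix.one_mulVec, hT, dotProduct_comm]
    -- quadratic in b, via matrix B
    have h4 : ∑ i : Fin n, ∑ j : Fin n, c i * c j * (b (s i) ⬝ᵥ M.mulVec (b (s j))) = T := by
      set B : Matrix (Fin n) (Fin r) ℝ := fun i k => b (s i) k with hB
      have hBa : Bᵀ.mulVec c = a := by
        funext k
        simp only [Matrix.mulVec, dotProduct, Matrix.transpose_apply, hB, ha]
        exact Finset.sum_congr rfl fun i _ => mul_comm _ _
      have hstep : ∑ i : Fin n, ∑ j : Fin n, c i * c j * (b (s i) ⬝ᵥ M.mulVec (b (s j)))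
          = c ⬝ᵥ (B * (M * Bᵀ)).mulVec c := by
        simp only [dotProduct, Matrix.mulVec, Matrix.mul_apply,
          Matrix.transpose_apply, Finset.mul_sum, Finset.sum_mul]
        simp only [hB]
        exact Finset.sum_congr rfl fun i _ => Finset.sum_congr rfl fun j _ =>
          Finset.sum_congr rfl fun k _ => Finset.sum_congr rfl fun l _ => by ring
      have hvB : c ᵥ* B = a := by rw [← Matrix.mulVec_transpose, hBa]
      rw [hstep, ← Matrix.mulVec_mulVec, ← Matrix.mulVec_mulVec, hBa,
        Matrix.dotProduct_mulVec, hvB, hT]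
    have key := hpsd (n + r) (Fin.append s Q) (Fin.append c d)
    simp only [Fin.sum_univ_add, Fin.append_left, Fin.append_right] at key
    rw [Finset.sum_add_distrib, Finset.sum_add_distrib, hc1, hc2, hdd] at key
    have hsum : ∑ i : Fin n, ∑ j : Fin n, c i * c j * w (s i) (s j)
        = (∑ i : Fin n, ∑ j : Fin n, c i * c j * v (s i) (s j)) - T := by
      simp only [hw, mul_sub, Finset.sum_sub_distrib, h4]
    rw [hsum]
    linarith [key]
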